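/- Let D₁, D₂ be p×p real symmetric positive definite matrices, ρ > 0 with ρ strictly smaller than the smallest eigenvalue of both D₁ and D₂, and let q̄ be the largest eigenvalue of D₁ + D₂. Let Φᵢ = (I + Dᵢ/ρ)⁻¹. Then for any real eigenvalue λ of the 2-block ADMM mapping matrix, i.e., any λ with unit vector (v₁, v₂) satisfying (1/2)v₁ + (1/2)Φ₂(I − D₂/ρ)v₂ = λv₁ and (1/2)v₂ + (1/2)Φ₁(I − D₁/ρ)v₁ = λv₂, one has λ ≤ q̄/(2ρ + q̄). -/

import Mathlib

open Matrix Pointwise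

variable {p : ℕ}

private lemma herm_smul' {A : Matrix (Fin p) (Fin p) ℝ} (hA : A.IsHermitian) (c : ℝ) :
    (c • A).IsHermitian := by
  rw [Matrix.IsHermitian, Matrix.conjTranspose_smul, star_trivial, hA.eq]

private lemma dot_symm' {A : Matrix (Fin p) (Fin p) ℝ} (hA : A.IsHermitian) (x y : Fin p → ℝ) :
    x ⬝ᵥ A *ᵥ y = y ⬝ᵥ A *ᵥ x := by
  have h : Aᵀ = A := by
    rw [← Matrix.conjTranspose_eq_transpose_of_trivial, hA.eq]
  rw [Matrix.dotProduct_mulVec]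
  nth_rewrite 1 [← h]
  rw [Matrix.vecMul_transpose, dotProduct_comm]

private lemma quad_le' {A : Matrix (Fin p) (Fin p) ℝ} (hA : A.IsHermitian) {c : ℝ}
    (h : ∀ x ∈ spectrum ℝ A, x ≤ c) (v : Fin p → ℝ) :
    v ⬝ᵥ A *ᵥ v ≤ c * (v ⬝ᵥ v) := by
  have hB : (c • (1 : Matrix (Fin p) (Fin p) ℝ) - A).IsHermitian :=
    (herm_smul' Matrix.isHermitian_one c).sub hA
  have hpsd : (c • (1 : Matrix (Fin p) (Fin p) ℝ) - A).PosSemidef := by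
    apply hB.posSemidef_iff_eigenvalues_nonneg.mpr
    intro i
    show (0:ℝ) ≤ hB.eigenvalues i
    have hmem := hB.eigenvalues_mem_spectrum_real i
    rw [show spectrum ℝ (c • (1 : Matrix (Fin p) (Fin p) ℝ) - A) = {c} - spectrum ℝ A by
      rw [show c • (1 : Matrix (Fin p) (Fin p) ℝ) - A = algebraMap ℝ _ c - A by
        rw [Algebra.algebraMap_eq_smul_one], ← spectrum.singleton_sub_eq]] at hmem
    obtain ⟨y, hy, x, hx, hxy⟩ := Set.mem_sub.mp hmem
    rw [Set.mem_singleton_iff] at hy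
    subst hy
    have := h x hx
    linarith [hxy ▸ sub_nonneg.mpr this]
  have h0 := hpsd.dotProduct_mulVec_nonneg v
  simp only [star_trivial, Matrix.sub_mulVec, Matrix.smul_mulVec, Matrix.one_mulVec,
    dotProduct_sub, dotProduct_smul, smul_eq_mul] at h0
  linarith

private lemma quad_ge' {A : Matrix (Fin p) (Fin p) ℝ} (hA : A.IsHermitian) {c : ℝ}
    (h : ∀ x ∈ spectrum ℝ A, c ≤ x) (v : Fin p → ℝ) :
    c * (v ⬝ᵥ v) ≤ v ⬝ᵥ A *ᵥ v := by
  have hB : (A - c • (1 : Matrix (Fin p) (Fin p) ℝ)).IsHermitian :=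
    hA.sub (herm_smul' Matrix.isHermitian_one c)
  have hpsd : (A - c • (1 : Matrix (Fin p) (Fin p) ℝ)).PosSemidef := by
    apply hB.posSemidef_iff_eigenvalues_nonneg.mpr
    intro i
    show (0:ℝ) ≤ hB.eigenvalues i
    have hmem := hB.eigenvalues_mem_spectrum_real i
    rw [show spectrum ℝ (A - c • (1 : Matrix (Fin p) (Fin p) ℝ)) = spectrum ℝ A - {c} by
      rw [show A - c • (1 : Matrix (Fin p) (Fin p) ℝ) = A - algebraMap ℝ _ c by
        rw [Algebra.algebraMap_eq_smul_one], ← spectrum.sub_singleton_eq]] at hmem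
    obtain ⟨x, hx, y, hy, hxy⟩ := Set.mem_sub.mp hmem
    rw [Set.mem_singleton_iff] at hy
    subst hy
    have := h x hx
    linarith [hxy ▸ sub_nonneg.mpr this]
  have h0 := hpsd.dotProduct_mulVec_nonneg v
  simp only [star_trivial, Matrix.sub_mulVec, Matrix.smul_mulVec, Matrix.one_mulVec,
    dotProduct_sub, dotProduct_smul, smul_eq_mul] at h0
  linarith

private lemma cs' {M : Matrix (Fin p) (Fin p) ℝ} (hM : M.PosSemidef) (x y : Fin p → ℝ) :
    (x ⬝ᵥ M *ᵥ y)^2 ≤ (x ⬝ᵥ M *ᵥ x) * (y ⬝ᵥ M *ᵥ y) := by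
  have key : ∀ t : ℝ, 0 ≤ (y ⬝ᵥ M *ᵥ y) * (t * t) + (2 * (x ⬝ᵥ M *ᵥ y)) * t + (x ⬝ᵥ M *ᵥ x) := by
    intro t
    have h0 := hM.dotProduct_mulVec_nonneg (x + t • y)
    have hexp : star (x + t • y) ⬝ᵥ M *ᵥ (x + t • y)
        = (y ⬝ᵥ M *ᵥ y) * (t * t) + (2 * (x ⬝ᵥ M *ᵥ y)) * t + (x ⬝ᵥ M *ᵥ x) := by
      simp only [star_trivial, Matrix.mulVec_add, Matrix.mulVec_smul, dotProduct_add,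
        add_dotProduct, dotProduct_smul, smul_dotProduct, smul_eq_mul]
      rw [dot_symm' hM.1 y x]
      ring
    rw [hexp] at h0
    exact h0
  have hd := discrim_le_zero key
  rw [discrim] at hd
  nlinarith [hd]

private lemma cs_inv' {M : Matrix (Fin p) (Fin p) ℝ} (hM : M.PosDef) (v : Fin p → ℝ) :
    (v ⬝ᵥ v)^2 ≤ (v ⬝ᵥ M *ᵥ v) * (v ⬝ᵥ M⁻¹ *ᵥ v) := by
  have hdet : IsUnit M.det := (Matrix.isUnit_iff_isUnit_det M).mp hM.isUnit
  have hMy : M *ᵥ (M⁻¹ *ᵥ v) = v := by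
    rw [Matrix.mulVec_mulVec, Matrix.mul_nonsing_inv _ hdet, Matrix.one_mulVec]
  have h := cs' hM.posSemidef v (M⁻¹ *ᵥ v)
  rw [hMy, dotProduct_comm (M⁻¹ *ᵥ v) v] at h
  exact h

private lemma amgm' {Ψ : Matrix (Fin p) (Fin p) ℝ} (hΨ : Ψ.PosSemidef) (x y : Fin p → ℝ) :
    -(x ⬝ᵥ Ψ *ᵥ y) ≤ (1/2) * (x ⬝ᵥ Ψ *ᵥ x + y ⬝ᵥ Ψ *ᵥ y) := by
  have h0 := hΨ.dotProduct_mulVec_nonneg (x + y)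
  simp only [star_trivial, Matrix.mulVec_add, dotProduct_add, add_dotProduct] at h0
  rw [dot_symm' hΨ.1 y x] at h0
  linarith

private lemma psi_psd' {D : Matrix (Fin p) (Fin p) ℝ} {ρ : ℝ} (hρ : 0 < ρ) (hD : D.IsHermitian)
    (hspec : ∀ x ∈ spectrum ℝ D, ρ ≤ x) (hdet : IsUnit (1 + ρ⁻¹ • D).det)
    (hherm : (1 + ρ⁻¹ • D).IsHermitian) :
    (1 - (2:ℝ) • (1 + ρ⁻¹ • D)⁻¹).PosSemidef := by
  set M : Matrix (Fin p) (Fin p) ℝ := 1 + ρ⁻¹ • D with hMdef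
  set A : Matrix (Fin p) (Fin p) ℝ := ρ⁻¹ • D - 1 with hAdef
  have hAh : A.IsHermitian := (herm_smul' hD ρ⁻¹).sub Matrix.isHermitian_one
  have hApsd : A.PosSemidef := by
    refine .of_dotProduct_mulVec_nonneg hAh (fun x => ?_)
    have h1 := quad_ge' hD hspec x
    simp only [hAdef, star_trivial, Matrix.sub_mulVec, Matrix.smul_mulVec,
      Matrix.one_mulVec, dotProduct_sub, dotProduct_smul, smul_eq_mul]
    have h2 : ρ⁻¹ * (ρ * (x ⬝ᵥ x)) ≤ ρ⁻¹ * (x ⬝ᵥ D *ᵥ x) :=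
      mul_le_mul_of_nonneg_left h1 (inv_pos.mpr hρ).le
    rw [← mul_assoc, inv_mul_cancel₀ hρ.ne', one_mul] at h2
    linarith
  have hA2 : (A * A + (2:ℝ) • A).PosSemidef := by
    have h1 : (A * A).PosSemidef := by
      have := Matrix.posSemidef_conjTranspose_mul_self A
      rwa [hAh.eq] at this
    have h2 : ((2:ℝ) • A).PosSemidef := by
      have := hApsd.add hApsd
      rwa [← two_smul ℝ A] at this
    exact h1.add h2
  have hconj := hA2.mul_mul_conjTranspose_same M⁻¹
  rw [hherm.inv.eq] at hconj
  have hMA : A * M = A * A + (2:ℝ) • A := by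
    have h : M = A + (2:ℝ) • 1 := by
      rw [hMdef, hAdef, two_smul]
      abel
    rw [h, Matrix.mul_add, Matrix.mul_smul, mul_one]
  have hfin : M⁻¹ * (A * A + (2:ℝ) • A) * M⁻¹ = 1 - (2:ℝ) • M⁻¹ := by
    have hMsub : M - (2:ℝ) • 1 = A := by
      rw [hMdef, hAdef, two_smul]
      abel
    calc M⁻¹ * (A * A + (2:ℝ) • A) * M⁻¹ = M⁻¹ * A * (M * M⁻¹) := by
          rw [← hMA, Matrix.mul_assoc, Matrix.mul_assoc, Matrix.mul_assoc]
      _ = M⁻¹ * A := by rw [Matrix.mul_nonsing_inv _ hdet, mul_one]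
      _ = M⁻¹ * (M - (2:ℝ) • 1) := by rw [hMsub]
      _ = M⁻¹ * M - (2:ℝ) • M⁻¹ := by rw [Matrix.mul_sub, Matrix.mul_smul, mul_one]
      _ = 1 - (2:ℝ) • M⁻¹ := by rw [Matrix.nonsing_inv_mul _ hdet]
  rwa [hfin] at hconj

set_option maxHeartbeats 2000000 in
theorem two_block_admm_eigenvalue_bound {p : ℕ}
    (D₁ D₂ : Matrix (Fin p) (Fin p) ℝ) (hD₁ : D₁.PosDef) (hD₂ : D₂.PosDef)
    (ρ : ℝ) (hρ : 0 < ρ)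
    (hρ₁ : ∀ x ∈ spectrum ℝ D₁, ρ < x) (hρ₂ : ∀ x ∈ spectrum ℝ D₂, ρ < x)
    (qhi : ℝ) (hqhi_mem : qhi ∈ spectrum ℝ (D₁ + D₂))
    (hqhi : ∀ x ∈ spectrum ℝ (D₁ + D₂), x ≤ qhi)
    (lam : ℝ) (v₁ v₂ : Fin p → ℝ)
    (hunit : v₁ ⬝ᵥ v₁ + v₂ ⬝ᵥ v₂ = 1)
    (heq₁ : (1/2 : ℝ) • v₁ + (1/2 : ℝ) • ((1 + ρ⁻¹ • D₂)⁻¹ *ᵥ ((1 - ρ⁻¹ • D₂) *ᵥ v₂)) = lam • v₁)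
    (heq₂ : (1/2 : ℝ) • v₂ + (1/2 : ℝ) • ((1 + ρ⁻¹ • D₁)⁻¹ *ᵥ ((1 - ρ⁻¹ • D₁) *ᵥ v₁)) = lam • v₂) :
    lam ≤ qhi / (2 * ρ + qhi) := by
  have hD12 : (D₁ + D₂).PosDef := hD₁.add hD₂
  -- qhi is positive
  have hq_pos : 0 < qhi := by
    rcases Nat.eq_zero_or_pos p with hp | hp
    · exfalso
      apply spectrum.mem_iff.mp hqhi_mem
      apply (Matrix.isUnit_iff_isUnit_det _).mpr
      subst hp
      simp [Matrix.det_fin_zero]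
    · have i : Fin p := ⟨0, hp⟩
      calc (0:ℝ) < hD12.1.eigenvalues i := hD12.eigenvalues_pos i
        _ ≤ qhi := hqhi _ (hD12.1.eigenvalues_mem_spectrum_real i)
  have hρinv : (0:ℝ) < ρ⁻¹ := inv_pos.mpr hρ
  -- positive definiteness of the M matrices
  have hMpd : ∀ D : Matrix (Fin p) (Fin p) ℝ, D.PosDef → (1 + ρ⁻¹ • D).PosDef := by
    intro D hD
    refine .of_dotProduct_mulVec_pos (Matrix.isHermitian_one.add (herm_smul' hD.1 ρ⁻¹)) (fun x hx => ?_)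
    have h2 : (0:ℝ) ≤ x ⬝ᵥ D *ᵥ x := by
      have := hD.posSemidef.dotProduct_mulVec_nonneg x
      simpa using this
    have h3 : 0 < x ⬝ᵥ x :=
      lt_of_le_of_ne (Finset.sum_nonneg fun i _ => mul_self_nonneg _)
        (Ne.symm (fun h => hx (dotProduct_self_eq_zero.mp h)))
    simp only [star_trivial, Matrix.add_mulVec, Matrix.one_mulVec, Matrix.smul_mulVec,
      dotProduct_add, dotProduct_smul, smul_eq_mul]
    nlinarith [mul_nonneg hρinv.le h2]
  have hM₁pd := hMpd D₁ hD₁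
  have hM₂pd := hMpd D₂ hD₂
  have hdet₁ : IsUnit (1 + ρ⁻¹ • D₁).det := (Matrix.isUnit_iff_isUnit_det _).mp hM₁pd.isUnit
  have hdet₂ : IsUnit (1 + ρ⁻¹ • D₂).det := (Matrix.isUnit_iff_isUnit_det _).mp hM₂pd.isUnit
  set M₁ : Matrix (Fin p) (Fin p) ℝ := 1 + ρ⁻¹ • D₁ with hM₁def
  set M₂ : Matrix (Fin p) (Fin p) ℝ := 1 + ρ⁻¹ • D₂ with hM₂def
  -- the key matrix identity : M⁻¹ * (1 - ρ⁻¹ • D) = 2•M⁻¹ - 1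
  have key : ∀ (M D : Matrix (Fin p) (Fin p) ℝ), M = 1 + ρ⁻¹ • D → IsUnit M.det →
      M⁻¹ * (1 - ρ⁻¹ • D) = (2:ℝ) • M⁻¹ - 1 := by
    intro M D hMdef hdet
    have h : (1 - ρ⁻¹ • D : Matrix (Fin p) (Fin p) ℝ) = (2:ℝ) • (1 : Matrix (Fin p) (Fin p) ℝ) - M := by
      rw [hMdef, two_smul]
      abel
    rw [h, Matrix.mul_sub, Matrix.mul_smul, mul_one, Matrix.nonsing_inv_mul _ hdet]
  have hterm₂ : M₂⁻¹ *ᵥ ((1 - ρ⁻¹ • D₂) *ᵥ v₂) = (2:ℝ) • (M₂⁻¹ *ᵥ v₂) - v₂ := by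
    rw [Matrix.mulVec_mulVec, key M₂ D₂ hM₂def hdet₂, Matrix.sub_mulVec,
      Matrix.smul_mulVec, Matrix.one_mulVec]
  have hterm₁ : M₁⁻¹ *ᵥ ((1 - ρ⁻¹ • D₁) *ᵥ v₁) = (2:ℝ) • (M₁⁻¹ *ᵥ v₁) - v₁ := by
    rw [Matrix.mulVec_mulVec, key M₁ D₁ hM₁def hdet₁, Matrix.sub_mulVec,
      Matrix.smul_mulVec, Matrix.one_mulVec]
  rw [hterm₂] at heq₁
  rw [hterm₁] at heq₂
  -- scalar equations
  have E₁ : lam * (v₁ ⬝ᵥ v₁) = (1/2) * (v₁ ⬝ᵥ v₁) + v₁ ⬝ᵥ (M₂⁻¹ *ᵥ v₂) - (1/2) * (v₁ ⬝ᵥ v₂) := by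
    have h := congrArg (fun w => v₁ ⬝ᵥ w) heq₁
    simp only [dotProduct_add, dotProduct_smul, dotProduct_sub, smul_eq_mul] at h
    linarith
  have E₂ : lam * (v₂ ⬝ᵥ v₂) = (1/2) * (v₂ ⬝ᵥ v₂) + v₂ ⬝ᵥ (M₁⁻¹ *ᵥ v₁) - (1/2) * (v₁ ⬝ᵥ v₂) := by
    have h := congrArg (fun w => v₂ ⬝ᵥ w) heq₂
    simp only [dotProduct_add, dotProduct_smul, dotProduct_sub, smul_eq_mul] at h
    rw [dotProduct_comm v₂ v₁] at h
    linarith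
  -- the Ψ matrices are PSD
  have hΨ₁ : (1 - (2:ℝ) • M₁⁻¹).PosSemidef :=
    psi_psd' hρ hD₁.1 (fun x hx => (hρ₁ x hx).le) hdet₁ hM₁pd.1
  have hΨ₂ : (1 - (2:ℝ) • M₂⁻¹).PosSemidef :=
    psi_psd' hρ hD₂.1 (fun x hx => (hρ₂ x hx).le) hdet₂ hM₂pd.1
  -- quadratic form of Ψ in terms of Φ
  have hq : ∀ (Φ : Matrix (Fin p) (Fin p) ℝ) (x y : Fin p → ℝ),
      x ⬝ᵥ (1 - (2:ℝ) • Φ) *ᵥ y = x ⬝ᵥ y - 2 * (x ⬝ᵥ Φ *ᵥ y) := by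
    intro Φ x y
    simp [Matrix.sub_mulVec, Matrix.smul_mulVec, Matrix.one_mulVec,
      dotProduct_sub, dotProduct_smul, smul_eq_mul]
  -- AM-GM bounds on the cross terms
  have hA₂ := amgm' hΨ₂ v₁ v₂
  have hA₁ := amgm' hΨ₁ v₂ v₁
  rw [hq M₂⁻¹ v₁ v₂, hq M₂⁻¹ v₁ v₁, hq M₂⁻¹ v₂ v₂] at hA₂
  rw [hq M₁⁻¹ v₂ v₁, hq M₁⁻¹ v₂ v₂, hq M₁⁻¹ v₁ v₁] at hA₁
  rw [dotProduct_comm v₂ v₁] at hA₁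
  -- lower bound on the diagonal Φ terms
  have lower : ∀ v : Fin p → ℝ,
      4 * ρ / (2 * ρ + qhi) * (v ⬝ᵥ v) ≤ v ⬝ᵥ M₁⁻¹ *ᵥ v + v ⬝ᵥ M₂⁻¹ *ᵥ v := by
    intro v
    by_cases hv : v = 0
    · simp [hv]
    · have htpos : 0 < v ⬝ᵥ v :=
        lt_of_le_of_ne (Finset.sum_nonneg fun i _ => mul_self_nonneg _)
          (Ne.symm (fun h => hv (dotProduct_self_eq_zero.mp h)))
      have hd₁ : (0:ℝ) ≤ v ⬝ᵥ D₁ *ᵥ v := by have := hD₁.posSemidef.dotProduct_mulVec_nonneg v; simpa using this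
      have hd₂ : (0:ℝ) ≤ v ⬝ᵥ D₂ *ᵥ v := by have := hD₂.posSemidef.dotProduct_mulVec_nonneg v; simpa using this
      have ha₁ : v ⬝ᵥ v ≤ v ⬝ᵥ M₁ *ᵥ v := by
        rw [hM₁def]
        simp only [Matrix.add_mulVec, Matrix.one_mulVec, Matrix.smul_mulVec,
          dotProduct_add, dotProduct_smul, smul_eq_mul]
        nlinarith [mul_nonneg hρinv.le hd₁]
      have ha₂ : v ⬝ᵥ v ≤ v ⬝ᵥ M₂ *ᵥ v := by
        rw [hM₂def]
        simp only [Matrix.add_mulVec, Matrix.one_mulVec, Matrix.smul_mulVec,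
          dotProduct_add, dotProduct_smul, smul_eq_mul]
        nlinarith [mul_nonneg hρinv.le hd₂]
      have hsum : ρ * (v ⬝ᵥ M₁ *ᵥ v + v ⬝ᵥ M₂ *ᵥ v) ≤ (2 * ρ + qhi) * (v ⬝ᵥ v) := by
        have hDq : v ⬝ᵥ D₁ *ᵥ v + v ⬝ᵥ D₂ *ᵥ v ≤ qhi * (v ⬝ᵥ v) := by
          have := quad_le' (hD₁.1.add hD₂.1) hqhi v
          rwa [Matrix.add_mulVec, dotProduct_add] at this
        have hexp : v ⬝ᵥ M₁ *ᵥ v + v ⬝ᵥ M₂ *ᵥ v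
            = 2 * (v ⬝ᵥ v) + ρ⁻¹ * (v ⬝ᵥ D₁ *ᵥ v + v ⬝ᵥ D₂ *ᵥ v) := by
          rw [hM₁def, hM₂def]
          simp only [Matrix.add_mulVec, Matrix.one_mulVec, Matrix.smul_mulVec,
            dotProduct_add, dotProduct_smul, smul_eq_mul]
          ring
        rw [hexp]
        have hid : ρ * (2 * (v ⬝ᵥ v) + ρ⁻¹ * (v ⬝ᵥ D₁ *ᵥ v + v ⬝ᵥ D₂ *ᵥ v))
            = 2 * ρ * (v ⬝ᵥ v) + (v ⬝ᵥ D₁ *ᵥ v + v ⬝ᵥ D₂ *ᵥ v) := by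
          field_simp
        rw [hid]
        linarith
      have hcs₁ := cs_inv' hM₁pd v
      have hcs₂ := cs_inv' hM₂pd v
      set t := v ⬝ᵥ v
      set a₁ := v ⬝ᵥ M₁ *ᵥ v
      set a₂ := v ⬝ᵥ M₂ *ᵥ v
      set p₁ := v ⬝ᵥ M₁⁻¹ *ᵥ v
      set p₂ := v ⬝ᵥ M₂⁻¹ *ᵥ v
      clear_value t a₁ a₂ p₁ p₂
      have ha₁pos : 0 < a₁ := lt_of_lt_of_le htpos ha₁
      have ha₂pos : 0 < a₂ := lt_of_lt_of_le htpos ha₂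
      have hp₁ : t^2/a₁ ≤ p₁ := (div_le_iff₀ ha₁pos).mpr (by rw [mul_comm]; exact hcs₁)
      have hp₂ : t^2/a₂ ≤ p₂ := (div_le_iff₀ ha₂pos).mpr (by rw [mul_comm]; exact hcs₂)
      have harm : 4*t^2/(a₁+a₂) ≤ t^2/a₁ + t^2/a₂ := by
        rw [div_add_div _ _ ha₁pos.ne' ha₂pos.ne', div_le_div_iff₀ (add_pos ha₁pos ha₂pos) (mul_pos ha₁pos ha₂pos)]
        nlinarith [sq_nonneg (a₁ - a₂), sq_nonneg t]
      have last : 4 * ρ / (2 * ρ + qhi) * t ≤ 4*t^2/(a₁+a₂) := by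
        have hden : 0 < 2 * ρ + qhi := by linarith
        rw [div_mul_eq_mul_div, div_le_div_iff₀ hden (add_pos ha₁pos ha₂pos)]
        nlinarith [hsum, htpos, hρ]
      linarith
  have L₁ := lower v₁
  have L₂ := lower v₂
  -- assemble
  have hlam : lam ≤ 1 - (4 * ρ / (2 * ρ + qhi)) / 2 := by
    nlinarith [E₁, E₂, hunit, hA₂, hA₁, L₁, L₂]
  have hfinal : 1 - (4 * ρ / (2 * ρ + qhi)) / 2 = qhi / (2 * ρ + qhi) := by
    field_simp
    ring
  linarith [hfinal ▸ hlam]
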